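/- Let K be a field of characteristic zero, let G be an abelian group, let A be a finite-dimensional non-unital associative K-algebra, and let (B, η) be a universal coacting bialgebra of A. For a bialgebra homomorphism Φ : B → K[G], set A_σ^Φ = { a ∈ A | (id_A ⊗ Φ)(η(a)) = a ⊗ σ } for each σ ∈ G. Then (A_σ^Φ)_{σ ∈ G} is a G-grading of the algebra A, and the assignment Φ ↦ (A_σ^Φ)_{σ ∈ G} is a bijection from the set of bialgebra homomorphisms B → K[G] onto the set of G-gradings of A. -/

import Mathlib

/-!
Statement 18: Let `G` be an abelian group, `A` a finite-dimensional non-unital associative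
algebra over a field `K` of characteristic zero, and `(B, η)` a universal coacting bialgebra
of `A`. For a bialgebra homomorphism `Φ : B → K[G]` set
`A_σ^Φ = { a | (id_A ⊗ Φ)(η a) = a ⊗ σ }`. Then `(A_σ^Φ)_σ` is a `G`-grading of the algebra
`A`, and `Φ ↦ (A_σ^Φ)_σ` is a bijection from the bialgebra homomorphisms `B → K[G]` onto the
`G`-gradings of `A`.
-/

open TensorProduct

universe u

/-- `(C₀, η)` is a universal pair for `(A, B)`. -/
def IsUniversalAlgPair (K : Type u) [Field K]
    (A : Type u) [NonUnitalRing A] [Module K A] [SMulCommClass K A A] [IsScalarTower K A A]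
    (B : Type u) [NonUnitalRing B] [Module K B] [SMulCommClass K B B] [IsScalarTower K B B]
    (C₀ : Type u) [CommRing C₀] [Algebra K C₀]
    (η : B →ₙₐ[K] A ⊗[K] C₀) : Prop :=
  ∀ (C : Type u) [CommRing C] [Algebra K C], ∀ f : B →ₙₐ[K] A ⊗[K] C,
    ∃! Φ : C₀ →ₐ[K] C, ∀ x : B, f x = LinearMap.lTensor A Φ.toLinearMap (η x)

/-- A coaction of a commutative `K`-bialgebra `B` on the non-unital associative algebra
`A`. -/
def IsAlgCoaction (K : Type u) [Field K]
    (A : Type u) [NonUnitalRing A] [Module K A] [SMulCommClass K A A] [IsScalarTower K A A]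
    (B : Type u) [CommRing B] [Bialgebra K B]
    (η : A →ₙₐ[K] A ⊗[K] B) : Prop :=
  (∀ a : A, TensorProduct.rid K A
      (LinearMap.lTensor A (Coalgebra.counit (R := K) (A := B)) (η a)) = a) ∧
  ∀ a : A, LinearMap.lTensor A (Coalgebra.comul (R := K) (A := B)) (η a) =
    TensorProduct.assoc K A B B (LinearMap.rTensor B (η : A →ₗ[K] A ⊗[K] B) (η a))

/-- The diagonal group-like map `σ ↦ σ ⊗ σ` on the group algebra. -/
noncomputable def diagMonoidHom (K : Type u) [Field K] (G : Type u) [CommGroup G] :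
    G →* MonoidAlgebra K G ⊗[K] MonoidAlgebra K G where
  toFun σ := MonoidAlgebra.of K G σ ⊗ₜ[K] MonoidAlgebra.of K G σ
  map_one' := by
    show MonoidAlgebra.of K G 1 ⊗ₜ[K] MonoidAlgebra.of K G 1 = 1
    rw [map_one, Algebra.TensorProduct.one_def]
  map_mul' σ τ := by
    show MonoidAlgebra.of K G (σ * τ) ⊗ₜ[K] MonoidAlgebra.of K G (σ * τ)
      = (MonoidAlgebra.of K G σ ⊗ₜ[K] MonoidAlgebra.of K G σ) *
        (MonoidAlgebra.of K G τ ⊗ₜ[K] MonoidAlgebra.of K G τ)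
    rw [map_mul, Algebra.TensorProduct.tmul_mul_tmul]

/-- The standard comultiplication of the group algebra `K[G]`, determined by `Δ(σ) = σ ⊗ σ`
for `σ ∈ G`. -/
noncomputable def groupComul (K : Type u) [Field K] (G : Type u) [CommGroup G] :
    MonoidAlgebra K G →ₗ[K] MonoidAlgebra K G ⊗[K] MonoidAlgebra K G :=
  (MonoidAlgebra.lift K (MonoidAlgebra K G ⊗[K] MonoidAlgebra K G) G (diagMonoidHom K G)).toLinearMap

/-- The standard counit of the group algebra `K[G]`, determined by `ε(σ) = 1` for
`σ ∈ G`. -/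
noncomputable def groupCounit (K : Type u) [Field K] (G : Type u) [CommGroup G] :
    MonoidAlgebra K G →ₗ[K] K :=
  (MonoidAlgebra.lift K K G (1 : G →* K)).toLinearMap

/-- A bialgebra homomorphism from a commutative `K`-bialgebra `B` to the group algebra
`K[G]` (with its standard Hopf algebra structure in which every `σ ∈ G` is group-like):
a `K`-algebra homomorphism commuting with the counits and comultiplications. -/
structure BialgHomToGroupAlgebra (K : Type u) [Field K] (G : Type u) [CommGroup G]
    (B : Type u) [CommRing B] [Bialgebra K B] : Type u where
  toAlgHom : B →ₐ[K] MonoidAlgebra K G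
  counit_comp : ∀ b : B, groupCounit K G (toAlgHom b) = Coalgebra.counit (R := K) (A := B) b
  comul_comp : ∀ b : B, groupComul K G (toAlgHom b) =
    TensorProduct.map toAlgHom.toLinearMap toAlgHom.toLinearMap
      (Coalgebra.comul (R := K) (A := B) b)

/-- The `σ`-homogeneous component `{ a | (id_A ⊗ Φ)(η a) = a ⊗ σ }` of the grading of `A`
associated to `Φ : B → K[G]`. -/
noncomputable def algGrade {K : Type u} [Field K] {G : Type u} [CommGroup G]
    {A : Type u} [NonUnitalRing A] [Module K A] [SMulCommClass K A A] [IsScalarTower K A A]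
    {B : Type u} [CommRing B] [Bialgebra K B]
    (η : A →ₙₐ[K] A ⊗[K] B) (Φ : B →ₐ[K] MonoidAlgebra K G) (σ : G) : Submodule K A :=
  LinearMap.ker (LinearMap.lTensor A Φ.toLinearMap ∘ₗ (η : A →ₗ[K] A ⊗[K] B)
    - (TensorProduct.mk K A (MonoidAlgebra K G)).flip (MonoidAlgebra.of K G σ))

/-- A `G`-grading of the non-unital associative algebra `A`: an internal direct sum
decomposition `A = ⊕_σ A_σ` with `A_σ · A_τ ⊆ A_{σ τ}`. -/
def IsAlgGrading (K : Type u) [Field K] (G : Type u) [CommGroup G] [DecidableEq G]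
    (A : Type u) [NonUnitalRing A] [Module K A] [SMulCommClass K A A] [IsScalarTower K A A]
    (gr : G → Submodule K A) : Prop :=
  DirectSum.IsInternal gr ∧
    ∀ σ τ : G, ∀ x ∈ gr σ, ∀ y ∈ gr τ, x * y ∈ gr (σ * τ)

set_option linter.unusedSectionVars false
set_option synthInstance.maxHeartbeats 1000000
set_option maxHeartbeats 1000000

section EMA
variable (K : Type u) [Field K] (G : Type u) [CommGroup G] [DecidableEq G]
variable (M : Type u) [AddCommGroup M] [Module K M]

/-- `M ⊗ K[G] ≃ (G →₀ M)`, with the `MonoidAlgebra`-typed domain. -/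
noncomputable def eMA : M ⊗[K] MonoidAlgebra K G ≃ₗ[K] (G →₀ M) :=
  (LinearEquiv.lTensor M (MonoidAlgebra.coeffLinearEquiv K)).trans
    (TensorProduct.finsuppScalarRight K K M G)

variable {K G M}

lemma eMA_apply_tmul_apply (m : M) (p : MonoidAlgebra K G) (σ : G) :
    eMA K G M (m ⊗ₜ[K] p) σ = p.coeff σ • m :=
  TensorProduct.finsuppScalarRight_apply_tmul_apply m p.coeff σ

lemma eMA_apply_tmul (m : M) (p : MonoidAlgebra K G) :
    eMA K G M (m ⊗ₜ[K] p) = p.coeff.sum fun i n => Finsupp.single i (n • m) :=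
  TensorProduct.finsuppScalarRight_apply_tmul m p.coeff

end EMA
open TensorProduct

section AuxModule

variable {K : Type u} [Field K] {G : Type u} [CommGroup G] [DecidableEq G]

lemma groupCounit_single (σ : G) (k : K) : groupCounit K G (MonoidAlgebra.single σ k) = k := by
  simp [groupCounit, MonoidAlgebra.lift_single]

lemma groupComul_single (σ : G) (k : K) :
    groupComul K G (MonoidAlgebra.single σ k)
      = k • (MonoidAlgebra.single σ 1 ⊗ₜ[K] MonoidAlgebra.single σ 1) := by
  simp [groupComul, MonoidAlgebra.lift_single, diagMonoidHom, MonoidAlgebra.of_apply]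

variable {A : Type u} [AddCommGroup A] [Module K A]

lemma rid_lTensor_counit (x : A ⊗[K] MonoidAlgebra K G) :
    TensorProduct.rid K A (LinearMap.lTensor A (groupCounit K G) x)
      = (eMA K G A x).sum (fun _ m => m) := by
  induction x with
  | zero => simp
  | add x y hx hy =>
      rw [map_add, map_add, map_add, hx, hy, Finsupp.sum_add_index' (by simp) (by intros; rfl)]
  | tmul a y =>
      induction y using MonoidAlgebra.induction_linear with
      | zero => simp [TensorProduct.tmul_zero]
      | add f g hf hg =>
          rw [TensorProduct.tmul_add, map_add, map_add, map_add, hf, hg,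
            Finsupp.sum_add_index' (by simp) (by intros; rfl)]
      | single τ k =>
          rw [LinearMap.lTensor_tmul]
          rw [groupCounit_single, TensorProduct.rid_tmul,
            eMA_apply_tmul, MonoidAlgebra.coeff_single]
          rw [Finsupp.sum_single_index (by simp), Finsupp.sum_single_index (by simp)]

lemma eAG_rTensor {C : Type u} [AddCommGroup C] [Module K C] (g : A →ₗ[K] C)
    (x : A ⊗[K] MonoidAlgebra K G) (σ : G) :
    eMA K G C (LinearMap.rTensor (MonoidAlgebra K G) g x) σ
      = g (eMA K G A x σ) := by
  induction x with
  | zero => simp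
  | add x y hx hy => simp [map_add, Finsupp.add_apply, hx, hy]
  | tmul a y =>
      rw [LinearMap.rTensor_tmul, eMA_apply_tmul_apply,
        eMA_apply_tmul_apply, map_smul]

lemma eAG_assoc_symm_lTensor_comul (x : A ⊗[K] MonoidAlgebra K G) (σ : G) :
    eMA K G (A ⊗[K] MonoidAlgebra K G)
        ((TensorProduct.assoc K A (MonoidAlgebra K G) (MonoidAlgebra K G)).symm
          (LinearMap.lTensor A (groupComul K G) x)) σ
      = (eMA K G A x σ) ⊗ₜ[K] MonoidAlgebra.single σ 1 := by
  induction x with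
  | zero => simp
  | add x y hx hy =>
      simp only [map_add, Finsupp.add_apply, hx, hy, TensorProduct.add_tmul]
  | tmul a y =>
      induction y using MonoidAlgebra.induction_linear with
      | zero => simp [TensorProduct.tmul_zero]
      | add f g hf hg =>
          simp only [TensorProduct.tmul_add, map_add, Finsupp.add_apply, hf, hg,
            TensorProduct.add_tmul]
      | single τ k =>
          rw [LinearMap.lTensor_tmul]
          rw [groupComul_single, TensorProduct.tmul_smul, map_smul, map_smul,
            TensorProduct.assoc_symm_tmul, Finsupp.smul_apply,
            eMA_apply_tmul_apply,
            eMA_apply_tmul_apply]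
          by_cases h : τ = σ
          · subst h
            simp [MonoidAlgebra.coeff_single, Finsupp.single_eq_same, TensorProduct.smul_tmul']
          · simp [MonoidAlgebra.coeff_single, Finsupp.single_eq_of_ne' h]

lemma map_assoc_natural {M₂ M₃ N₂ N₃ : Type u}
    [AddCommGroup M₂] [Module K M₂] [AddCommGroup M₃] [Module K M₃]
    [AddCommGroup N₂] [Module K N₂] [AddCommGroup N₃] [Module K N₃]
    (φ : M₂ →ₗ[K] N₂) (ψ : M₃ →ₗ[K] N₃) (t : (A ⊗[K] M₂) ⊗[K] M₃) :
    TensorProduct.assoc K A N₂ N₃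
        (TensorProduct.map (LinearMap.lTensor A φ) ψ t)
      = LinearMap.lTensor A (TensorProduct.map φ ψ)
          (TensorProduct.assoc K A M₂ M₃ t) := by
  induction t with
  | zero => simp
  | add x y hx hy => simp [map_add, hx, hy]
  | tmul x c =>
      induction x with
      | zero => simp [TensorProduct.zero_tmul]
      | add x y hx hy => simp only [TensorProduct.add_tmul, map_add, hx, hy]
      | tmul a b => simp

lemma grade_eq_of_le (u v : G → Submodule K A)
    (hle : ∀ σ, u σ ≤ v σ) (htop : (⨆ σ, u σ) = ⊤) (hind : iSupIndep v) (σ : G) :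
    u σ = v σ := by
  refine le_antisymm (hle σ) ?_
  have h1 : u σ ⊔ (⨆ τ, ⨆ _ : τ ≠ σ, u τ) = ⊤ := by
    rw [eq_top_iff, ← htop]
    refine iSup_le fun τ => ?_
    by_cases h : τ = σ
    · subst h; exact le_sup_left
    · exact le_trans (le_iSup₂ (f := fun τ (_ : τ ≠ σ) => u τ) τ h) le_sup_right
  have h2 : (⨆ τ, ⨆ _ : τ ≠ σ, u τ) ⊓ v σ ≤ ⊥ := by
    refine le_trans (inf_le_inf_right _ (iSup₂_mono fun τ _ => hle τ)) ?_
    rw [inf_comm]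
    exact (hind σ).le_bot
  calc v σ = (u σ ⊔ (⨆ τ, ⨆ _ : τ ≠ σ, u τ)) ⊓ v σ := by rw [h1, top_inf_eq]
    _ = u σ ⊔ ((⨆ τ, ⨆ _ : τ ≠ σ, u τ) ⊓ v σ) := sup_inf_assoc_of_le _ (hle σ)
    _ ≤ u σ ⊔ ⊥ := sup_le_sup_left h2 _
    _ = u σ := sup_bot_eq _

end AuxModule
section MainAux

variable {K : Type u} [Field K] {G : Type u} [CommGroup G] [DecidableEq G]
variable {A : Type u} [NonUnitalRing A] [Module K A] [SMulCommClass K A A] [IsScalarTower K A A]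
variable {B : Type u} [CommRing B] [Bialgebra K B]

/-- the linear map `(id ⊗ φ) ∘ η`. -/
noncomputable def fm (η : A →ₙₐ[K] A ⊗[K] B) (φ : B →ₗ[K] MonoidAlgebra K G) :
    A →ₗ[K] A ⊗[K] MonoidAlgebra K G :=
  LinearMap.lTensor A φ ∘ₗ (η : A →ₗ[K] A ⊗[K] B)

lemma fm_apply (η : A →ₙₐ[K] A ⊗[K] B) (φ : B →ₗ[K] MonoidAlgebra K G) (a : A) :
    fm η φ a = LinearMap.lTensor A φ (η a) := rfl

lemma mem_algGrade_iff (η : A →ₙₐ[K] A ⊗[K] B) (Φ : B →ₐ[K] MonoidAlgebra K G)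
    (σ : G) (a : A) :
    a ∈ algGrade η Φ σ ↔ fm η Φ.toLinearMap a = a ⊗ₜ[K] MonoidAlgebra.single σ 1 := by
  simp only [algGrade, LinearMap.mem_ker, LinearMap.sub_apply, sub_eq_zero, fm,
    LinearMap.comp_apply, LinearMap.flip_apply, TensorProduct.mk_apply,
    MonoidAlgebra.of_apply]

lemma lTensor_mul {C C' : Type u} [CommRing C] [Algebra K C] [CommRing C'] [Algebra K C']
    (ψ : C →ₗ[K] C') (hψ : ∀ c c', ψ (c * c') = ψ c * ψ c') (x y : A ⊗[K] C) :
    LinearMap.lTensor A ψ (x * y) =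
      LinearMap.lTensor A ψ x * LinearMap.lTensor A ψ y := by
  induction x with
  | zero => simp [zero_mul]
  | add x x' hx hx' => simp only [add_mul, map_add, hx, hx']
  | tmul a c =>
      induction y with
      | zero => simp [mul_zero]
      | add y y' hy hy' => simp only [mul_add, map_add, hy, hy']
      | tmul b c' =>
          simp only [Algebra.TensorProduct.tmul_mul_tmul, LinearMap.lTensor_tmul, hψ]

lemma fm_mul (η : A →ₙₐ[K] A ⊗[K] B) (Φ : B →ₐ[K] MonoidAlgebra K G) (x y : A) :
    fm η Φ.toLinearMap (x * y) = fm η Φ.toLinearMap x * fm η Φ.toLinearMap y := by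
  simp only [fm_apply, show (η : A →ₗ[K] A ⊗[K] B) (x*y) = η (x*y) from rfl]
  rw [map_mul]
  exact lTensor_mul _ (fun c c' => map_mul Φ c c') _ _

/-- `fm` as a non-unital algebra homomorphism. -/
noncomputable def fmHom (η : A →ₙₐ[K] A ⊗[K] B) (Φ : B →ₐ[K] MonoidAlgebra K G) :
    A →ₙₐ[K] A ⊗[K] MonoidAlgebra K G :=
  { toFun := fm η Φ.toLinearMap
    map_add' := map_add _
    map_smul' := map_smul _
    map_zero' := map_zero _
    map_mul' := fm_mul η Φ }

lemma fm_assoc_key (η : A →ₙₐ[K] A ⊗[K] B) (φ : B →ₗ[K] MonoidAlgebra K G) (a : A) :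
    LinearMap.lTensor A (TensorProduct.map φ φ)
        ((TensorProduct.assoc K A B B)
          (LinearMap.rTensor B (η : A →ₗ[K] A ⊗[K] B) (η a)))
      = TensorProduct.assoc K A (MonoidAlgebra K G) (MonoidAlgebra K G)
          (LinearMap.rTensor (MonoidAlgebra K G) (fm η φ) (fm η φ a)) := by
  rw [← map_assoc_natural]
  congr 1
  have h1 : LinearMap.rTensor (MonoidAlgebra K G) (fm η φ) (fm η φ a)
      = (LinearMap.rTensor (MonoidAlgebra K G) (fm η φ) ∘ₗ LinearMap.lTensor A φ)
          ((η : A →ₗ[K] A ⊗[K] B) a) := rfl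
  have h2 : TensorProduct.map (LinearMap.lTensor A φ) φ
        (LinearMap.rTensor B (η : A →ₗ[K] A ⊗[K] B) (η a))
      = (TensorProduct.map (LinearMap.lTensor A φ) φ ∘ₗ
          LinearMap.rTensor B (η : A →ₗ[K] A ⊗[K] B)) ((η : A →ₗ[K] A ⊗[K] B) a) := rfl
  rw [h1, h2, LinearMap.rTensor_comp_lTensor, LinearMap.map_comp_rTensor]
  rfl

end MainAux
section CoactAux

variable {K : Type u} [Field K] {G : Type u} [CommGroup G] [DecidableEq G]
variable {A : Type u} [NonUnitalRing A] [Module K A] [SMulCommClass K A A] [IsScalarTower K A A]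
variable {B : Type u} [CommRing B] [Bialgebra K B]
variable (η : A →ₙₐ[K] A ⊗[K] B)

lemma fm_counit (hc : IsAlgCoaction K A B η) (Φ : BialgHomToGroupAlgebra K G B) (a : A) :
    TensorProduct.rid K A
      (LinearMap.lTensor A (groupCounit K G) (fm η Φ.toAlgHom.toLinearMap a)) = a := by
  have h : (groupCounit K G) ∘ₗ Φ.toAlgHom.toLinearMap = Coalgebra.counit (R := K) (A := B) :=
    LinearMap.ext Φ.counit_comp
  rw [fm_apply, ← LinearMap.comp_apply, ← LinearMap.lTensor_comp, h]
  exact hc.1 a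

lemma sum_fm (hc : IsAlgCoaction K A B η) (Φ : BialgHomToGroupAlgebra K G B) (a : A) :
    ((eMA K G A (fm η Φ.toAlgHom.toLinearMap a)).sum
      fun _ m => m) = a := by
  rw [← rid_lTensor_counit]
  exact fm_counit η hc Φ a

lemma fm_coassoc (hc : IsAlgCoaction K A B η) (Φ : BialgHomToGroupAlgebra K G B) (a : A) :
    LinearMap.lTensor A (groupComul K G) (fm η Φ.toAlgHom.toLinearMap a)
      = TensorProduct.assoc K A (MonoidAlgebra K G) (MonoidAlgebra K G)
          (LinearMap.rTensor (MonoidAlgebra K G) (fm η Φ.toAlgHom.toLinearMap)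
            (fm η Φ.toAlgHom.toLinearMap a)) := by
  have h : (groupComul K G) ∘ₗ Φ.toAlgHom.toLinearMap
      = TensorProduct.map Φ.toAlgHom.toLinearMap Φ.toAlgHom.toLinearMap ∘ₗ
          Coalgebra.comul (R := K) (A := B) :=
    LinearMap.ext Φ.comul_comp
  rw [fm_apply, ← LinearMap.comp_apply, ← LinearMap.lTensor_comp, h,
    LinearMap.lTensor_comp, LinearMap.comp_apply,
    show (LinearMap.lTensor A (Coalgebra.comul (R := K) (A := B))) (η a)
      = TensorProduct.assoc K A B B
        (LinearMap.rTensor B (η : A →ₗ[K] A ⊗[K] B) (η a)) from hc.2 a]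
  exact fm_assoc_key η Φ.toAlgHom.toLinearMap a

lemma proj_mem_algGrade (hc : IsAlgCoaction K A B η) (Φ : BialgHomToGroupAlgebra K G B)
    (a : A) (σ : G) :
    eMA K G A (fm η Φ.toAlgHom.toLinearMap a) σ
      ∈ algGrade η Φ.toAlgHom σ := by
  rw [mem_algGrade_iff]
  have h := fm_coassoc η hc Φ a
  have h2 : (TensorProduct.assoc K A (MonoidAlgebra K G) (MonoidAlgebra K G)).symm
        (LinearMap.lTensor A (groupComul K G) (fm η Φ.toAlgHom.toLinearMap a))
      = LinearMap.rTensor (MonoidAlgebra K G) (fm η Φ.toAlgHom.toLinearMap)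
          (fm η Φ.toAlgHom.toLinearMap a) := by
    rw [h, LinearEquiv.symm_apply_apply]
  have h3 := congrArg (fun z => eMA K G (A ⊗[K] MonoidAlgebra K G) z σ) h2
  rw [eAG_assoc_symm_lTensor_comul, eAG_rTensor] at h3
  exact h3.symm

lemma fm_of_mem_grade (Φ : B →ₐ[K] MonoidAlgebra K G) (σ : G) (a : A)
    (h : a ∈ algGrade η Φ σ) :
    eMA K G A (fm η Φ.toLinearMap a)
      = Finsupp.single σ a := by
  rw [mem_algGrade_iff] at h
  rw [h, eMA_apply_tmul, MonoidAlgebra.coeff_single,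
    Finsupp.sum_single_index (by simp), one_smul]

lemma grading_of_bialghom (hc : IsAlgCoaction K A B η) (Φ : BialgHomToGroupAlgebra K G B) :
    IsAlgGrading K G A (algGrade η Φ.toAlgHom) := by
  constructor
  · apply DirectSum.isInternal_submodule_of_iSupIndep_of_iSup_eq_top
    · intro σ
      rw [Submodule.disjoint_def]
      intro x hx hx'
      have hzero : ∀ y ∈ (⨆ τ, ⨆ _ : τ ≠ σ, algGrade η Φ.toAlgHom τ),
          eMA K G A (fm η Φ.toAlgHom.toLinearMap y) σ = 0 := by
        intro y hy
        refine Submodule.iSup_induction (motive := fun z =>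
          eMA K G A (fm η Φ.toAlgHom.toLinearMap z) σ = 0)
          _ hy ?_ (by show ((eMA K G A) ((fm η Φ.toAlgHom.toLinearMap) 0)) σ = 0; rw [map_zero, LinearEquiv.map_zero]; simp) ?_
        · intro τ z hz
          by_cases h : τ = σ
          · subst h; rw [iSup_neg (by simp)] at hz
            simp only [Submodule.mem_bot] at hz
            rw [hz, map_zero, LinearEquiv.map_zero]; simp
          · rw [iSup_pos h] at hz
            rw [fm_of_mem_grade η Φ.toAlgHom τ z hz]
            exact Finsupp.single_eq_of_ne' h
        · intro z w hz hw
          rw [map_add, LinearEquiv.map_add, Finsupp.add_apply, hz, hw, add_zero]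
      have h1 : eMA K G A
          (fm η Φ.toAlgHom.toLinearMap x) σ = x := by
        rw [fm_of_mem_grade η Φ.toAlgHom σ x hx]
        exact Finsupp.single_eq_same
      rw [← h1, hzero x hx']
    · rw [eq_top_iff]
      intro a _
      rw [← sum_fm η hc Φ a]
      exact Submodule.sum_mem _ fun τ _ =>
        Submodule.mem_iSup_of_mem τ (proj_mem_algGrade η hc Φ a τ)
  · intro σ τ x hx y hy
    rw [mem_algGrade_iff] at hx hy ⊢
    rw [fm_mul, hx, hy, Algebra.TensorProduct.tmul_mul_tmul,
      MonoidAlgebra.single_mul_single, one_mul]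

end CoactAux
section InjSurjAux

variable {K : Type u} [Field K] {G : Type u} [CommGroup G] [DecidableEq G]
variable {A : Type u} [NonUnitalRing A] [Module K A] [SMulCommClass K A A] [IsScalarTower K A A]
variable {B : Type u} [CommRing B] [Bialgebra K B]
variable (η : A →ₙₐ[K] A ⊗[K] B)

lemma fm_eq_of_grades (hc : IsAlgCoaction K A B η) (Φ Φ' : BialgHomToGroupAlgebra K G B)
    (h : ∀ σ, algGrade η Φ.toAlgHom σ = algGrade η Φ'.toAlgHom σ) (a : A) :
    fm η Φ.toAlgHom.toLinearMap a = fm η Φ'.toAlgHom.toLinearMap a := by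
  set F := eMA K G A (fm η Φ.toAlgHom.toLinearMap a) with hF
  apply (eMA K G A).injective
  have h1 : eMA K G A (fm η Φ'.toAlgHom.toLinearMap a)
      = F.sum fun τ m => Finsupp.single τ m := by
    conv_lhs => rw [← sum_fm η hc Φ a, ← hF]
    rw [map_finsuppSum (fm η Φ'.toAlgHom.toLinearMap), map_finsuppSum (eMA K G A)]
    exact Finsupp.sum_congr fun τ _ => fm_of_mem_grade η Φ'.toAlgHom τ _
      (by rw [← h τ]; exact proj_mem_algGrade η hc Φ a τ)
  rw [h1, Finsupp.sum_single, hF]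

variable (gr : G → Submodule K A)

/-- the coaction associated to a grading. -/
noncomputable def fgr (h : DirectSum.IsInternal gr) :
    A →ₗ[K] A ⊗[K] MonoidAlgebra K G :=
  (DirectSum.toModule K G _ fun σ =>
      ((TensorProduct.mk K A (MonoidAlgebra K G)).flip (MonoidAlgebra.single σ 1)) ∘ₗ
        (gr σ).subtype) ∘ₗ
    (LinearEquiv.ofBijective (DirectSum.coeLinearMap gr) h).symm.toLinearMap

lemma fgr_of_mem (h : DirectSum.IsInternal gr) {σ : G} {x : A} (hx : x ∈ gr σ) :
    fgr gr h x = x ⊗ₜ[K] MonoidAlgebra.single σ 1 := by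
  have h1 : (LinearEquiv.ofBijective (DirectSum.coeLinearMap gr) h).symm x
      = DirectSum.lof K G (fun σ => gr σ) σ ⟨x, hx⟩ := by
    apply (LinearEquiv.ofBijective (DirectSum.coeLinearMap gr) h).injective
    rw [LinearEquiv.apply_symm_apply]
    show x = DirectSum.coeLinearMap gr (DirectSum.lof K G (fun σ => gr σ) σ ⟨x, hx⟩)
    rw [DirectSum.lof_eq_of, DirectSum.coeLinearMap_of]
  show (DirectSum.toModule K G _ _) ((LinearEquiv.ofBijective (DirectSum.coeLinearMap gr) h).symm x) = _
  rw [h1, DirectSum.toModule_lof]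
  rfl

lemma fgr_mul (hgr : IsAlgGrading K G A gr) (a b : A) :
    fgr gr hgr.1 (a * b) = fgr gr hgr.1 a * fgr gr hgr.1 b := by
  have htop := hgr.1.submodule_iSup_eq_top
  have ha : a ∈ ⨆ σ, gr σ := by rw [htop]; trivial
  refine Submodule.iSup_induction gr
    (motive := fun z => fgr gr hgr.1 (z * b) = fgr gr hgr.1 z * fgr gr hgr.1 b) ha ?_
    (by simp [zero_mul]) ?_
  · intro σ x hx
    have hb : b ∈ ⨆ σ, gr σ := by rw [htop]; trivial
    refine Submodule.iSup_induction gr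
      (motive := fun w => fgr gr hgr.1 (x * w) = fgr gr hgr.1 x * fgr gr hgr.1 w) hb ?_
      (by simp [mul_zero]) ?_
    · intro τ y hy
      rw [fgr_of_mem gr hgr.1 hx, fgr_of_mem gr hgr.1 hy,
        fgr_of_mem gr hgr.1 (hgr.2 σ τ x hx y hy),
        Algebra.TensorProduct.tmul_mul_tmul, MonoidAlgebra.single_mul_single, one_mul]
    · intro w w' hw hw'
      rw [mul_add, map_add, hw, hw', map_add, mul_add]
  · intro z z' hz hz'
    rw [add_mul, map_add, hz, hz', map_add, add_mul]

/-- `fgr` as a non-unital algebra homomorphism. -/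
noncomputable def fgrHom (hgr : IsAlgGrading K G A gr) :
    A →ₙₐ[K] A ⊗[K] MonoidAlgebra K G :=
  { toFun := fgr gr hgr.1
    map_add' := map_add _
    map_smul' := map_smul _
    map_zero' := map_zero _
    map_mul' := fgr_mul gr hgr }

lemma fgr_counit (hgr : IsAlgGrading K G A gr) (a : A) :
    TensorProduct.rid K A (LinearMap.lTensor A (groupCounit K G) (fgr gr hgr.1 a)) = a := by
  have ha : a ∈ ⨆ σ, gr σ := by rw [hgr.1.submodule_iSup_eq_top]; trivial
  refine Submodule.iSup_induction gr
    (motive := fun z => TensorProduct.rid K A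
      (LinearMap.lTensor A (groupCounit K G) (fgr gr hgr.1 z)) = z) ha ?_ (by simp) ?_
  · intro σ x hx
    rw [fgr_of_mem gr hgr.1 hx, LinearMap.lTensor_tmul, groupCounit_single,
      TensorProduct.rid_tmul, one_smul]
  · intro z w hz hw
    rw [map_add, map_add, map_add, hz, hw]

lemma fgr_coassoc (hgr : IsAlgGrading K G A gr) (a : A) :
    LinearMap.lTensor A (groupComul K G) (fgr gr hgr.1 a)
      = TensorProduct.assoc K A (MonoidAlgebra K G) (MonoidAlgebra K G)
          (LinearMap.rTensor (MonoidAlgebra K G) (fgr gr hgr.1) (fgr gr hgr.1 a)) := by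
  have ha : a ∈ ⨆ σ, gr σ := by rw [hgr.1.submodule_iSup_eq_top]; trivial
  refine Submodule.iSup_induction gr
    (motive := fun z => LinearMap.lTensor A (groupComul K G) (fgr gr hgr.1 z)
      = TensorProduct.assoc K A (MonoidAlgebra K G) (MonoidAlgebra K G)
          (LinearMap.rTensor (MonoidAlgebra K G) (fgr gr hgr.1) (fgr gr hgr.1 z))) ha ?_
    (by simp) ?_
  · intro σ x hx
    rw [fgr_of_mem gr hgr.1 hx, LinearMap.lTensor_tmul, groupComul_single, one_smul,
      LinearMap.rTensor_tmul, fgr_of_mem gr hgr.1 hx, TensorProduct.assoc_tmul]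
  · intro z w hz hw
    rw [map_add, map_add, map_add, map_add, hz, hw]

/-- The map `a ↦ a ⊗ 1 : A → A ⊗ K` as a non-unital algebra homomorphism. -/
noncomputable def ridSymmHom : A →ₙₐ[K] A ⊗[K] K :=
  { toFun := (TensorProduct.rid K A).symm.toLinearMap
    map_add' := map_add _
    map_smul' := map_smul _
    map_zero' := map_zero _
    map_mul' := fun x y => by
      show (TensorProduct.rid K A).symm (x * y)
        = (TensorProduct.rid K A).symm x * (TensorProduct.rid K A).symm y
      rw [TensorProduct.rid_symm_apply, TensorProduct.rid_symm_apply,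
        TensorProduct.rid_symm_apply, Algebra.TensorProduct.tmul_mul_tmul, one_mul] }

/-- The map `(id ⊗ Δ) ∘ fgr` as a non-unital algebra homomorphism. -/
noncomputable def comulHomOf (hgr : IsAlgGrading K G A gr) :
    A →ₙₐ[K] A ⊗[K] (MonoidAlgebra K G ⊗[K] MonoidAlgebra K G) :=
  { toFun := LinearMap.lTensor A (groupComul K G) ∘ₗ fgr gr hgr.1
    map_add' := map_add _
    map_smul' := map_smul _
    map_zero' := map_zero _
    map_mul' := fun x y => by
      show LinearMap.lTensor A (groupComul K G) (fgr gr hgr.1 (x * y)) = _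
      rw [fgr_mul gr hgr]
      exact lTensor_mul (groupComul K G)
        (fun c c' => map_mul (MonoidAlgebra.lift K
          (MonoidAlgebra K G ⊗[K] MonoidAlgebra K G) G (diagMonoidHom K G)) c c') _ _ }

end InjSurjAux
theorem algGrade_bijective_onto_gradings
    (K : Type u) [Field K] [CharZero K]
    (G : Type u) [CommGroup G] [DecidableEq G]
    (A : Type u) [NonUnitalRing A] [Module K A] [SMulCommClass K A A] [IsScalarTower K A A]
    [FiniteDimensional K A]
    (B : Type u) [CommRing B] [Bialgebra K B]
    (η : A →ₙₐ[K] A ⊗[K] B)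
    (hcoact : IsAlgCoaction K A B η)
    (huniv : IsUniversalAlgPair K A A B η) :
    -- each `Φ` gives a `G`-grading of the algebra `A`
    (∀ Φ : BialgHomToGroupAlgebra K G B, IsAlgGrading K G A (algGrade η Φ.toAlgHom)) ∧
    -- the assignment is injective
    (∀ Φ Φ' : BialgHomToGroupAlgebra K G B,
      (∀ σ : G, algGrade η Φ.toAlgHom σ = algGrade η Φ'.toAlgHom σ) → Φ = Φ') ∧
    -- the assignment is surjective onto the `G`-gradings of `A`
    (∀ gr : G → Submodule K A, IsAlgGrading K G A gr →
      ∃ Φ : BialgHomToGroupAlgebra K G B, ∀ σ : G, algGrade η Φ.toAlgHom σ = gr σ) := by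
  refine ⟨fun Φ => grading_of_bialghom η hcoact Φ, ?_, ?_⟩
  · -- injectivity
    intro Φ Φ' h
    obtain ⟨Ψ, hΨ, huniq⟩ := huniv (MonoidAlgebra K G) (fmHom η Φ.toAlgHom)
    have e1 : Φ.toAlgHom = Ψ := huniq Φ.toAlgHom (fun x => rfl)
    have e2 : Φ'.toAlgHom = Ψ :=
      huniq Φ'.toAlgHom (fun x => fm_eq_of_grades η hcoact Φ Φ' h x)
    have e3 : Φ.toAlgHom = Φ'.toAlgHom := e1.trans e2.symm
    cases Φ; cases Φ'
    simp only at e3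
    subst e3
    rfl
  · -- surjectivity
    intro gr hgr
    have htop := hgr.1.submodule_iSup_eq_top
    obtain ⟨Φ₀, hΦ₀, _⟩ := huniv (MonoidAlgebra K G) (fgrHom gr hgr)
    have hfg : fgr gr hgr.1 = fm η Φ₀.toLinearMap := LinearMap.ext fun x => hΦ₀ x
    -- counit compatibility
    have hcounit : ∀ b : B, groupCounit K G (Φ₀ b) = Coalgebra.counit (R := K) (A := B) b := by
      obtain ⟨Ψ, hΨ, huq⟩ := huniv K (ridSymmHom (K := K) (A := A))
      have k1 : Bialgebra.counitAlgHom K B = Ψ := by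
        refine huq _ fun x => ?_
        show (TensorProduct.rid K A).symm x = _
        rw [LinearEquiv.symm_apply_eq,
          show (Bialgebra.counitAlgHom K B).toLinearMap
            = (Coalgebra.counit : B →ₗ[K] K) from rfl]
        exact (hcoact.1 x).symm
      have k2 : (MonoidAlgebra.lift K K G 1).comp Φ₀ = Ψ := by
        refine huq _ fun x => ?_
        show (TensorProduct.rid K A).symm x = _
        rw [LinearEquiv.symm_apply_eq, AlgHom.comp_toLinearMap,
          show (MonoidAlgebra.lift K K G 1).toLinearMap = groupCounit K G from rfl,
          LinearMap.lTensor_comp, LinearMap.comp_apply,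
          show LinearMap.lTensor A Φ₀.toLinearMap (η x) = fgr gr hgr.1 x from
            (hΦ₀ x).symm]
        exact (fgr_counit gr hgr x).symm
      intro b
      calc groupCounit K G (Φ₀ b) = ((MonoidAlgebra.lift K K G 1).comp Φ₀) b := rfl
        _ = (Bialgebra.counitAlgHom K B) b := by rw [k2, ← k1]
        _ = Coalgebra.counit (R := K) (A := B) b := rfl
    -- comultiplication compatibility
    have hcomul : ∀ b : B, groupComul K G (Φ₀ b)
        = TensorProduct.map Φ₀.toLinearMap Φ₀.toLinearMap
            (Coalgebra.comul (R := K) (A := B) b) := by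
      obtain ⟨Ψ, hΨ, huq⟩ :=
        huniv (MonoidAlgebra K G ⊗[K] MonoidAlgebra K G) (comulHomOf gr hgr)
      have hmap : (Algebra.TensorProduct.map Φ₀ Φ₀).toLinearMap
          = TensorProduct.map Φ₀.toLinearMap Φ₀.toLinearMap :=
        TensorProduct.ext' fun x y => by
          simp [Algebra.TensorProduct.map_tmul]
      have k1 : (MonoidAlgebra.lift K (MonoidAlgebra K G ⊗[K] MonoidAlgebra K G) G
          (diagMonoidHom K G)).comp Φ₀ = Ψ := by
        refine huq _ fun x => ?_
        show LinearMap.lTensor A (groupComul K G) (fgr gr hgr.1 x) = _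
        rw [AlgHom.comp_toLinearMap,
          show (MonoidAlgebra.lift K (MonoidAlgebra K G ⊗[K] MonoidAlgebra K G) G
            (diagMonoidHom K G)).toLinearMap = groupComul K G from rfl,
          LinearMap.lTensor_comp, LinearMap.comp_apply,
          show LinearMap.lTensor A Φ₀.toLinearMap (η x) = fgr gr hgr.1 x from
            (hΦ₀ x).symm]
      have k2 : (Algebra.TensorProduct.map Φ₀ Φ₀).comp (Bialgebra.comulAlgHom K B) = Ψ := by
        refine huq _ fun x => ?_
        show LinearMap.lTensor A (groupComul K G) (fgr gr hgr.1 x) = _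
        rw [AlgHom.comp_toLinearMap, hmap,
          show (Bialgebra.comulAlgHom K B).toLinearMap
            = (Coalgebra.comul : B →ₗ[K] B ⊗[K] B) from rfl,
          LinearMap.lTensor_comp, LinearMap.comp_apply,
          show LinearMap.lTensor A (Coalgebra.comul (R := K) (A := B)) (η x)
            = TensorProduct.assoc K A B B
                (LinearMap.rTensor B (η : A →ₗ[K] A ⊗[K] B) (η x)) from hcoact.2 x,
          fm_assoc_key η Φ₀.toLinearMap x, ← hfg]
        exact fgr_coassoc gr hgr x
      have k3 := k1.trans k2.symm
      intro b
      calc groupComul K G (Φ₀ b)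
          = ((MonoidAlgebra.lift K (MonoidAlgebra K G ⊗[K] MonoidAlgebra K G) G
              (diagMonoidHom K G)).comp Φ₀) b := rfl
        _ = ((Algebra.TensorProduct.map Φ₀ Φ₀).comp (Bialgebra.comulAlgHom K B)) b := by
            rw [k3]
        _ = TensorProduct.map Φ₀.toLinearMap Φ₀.toLinearMap
              (Coalgebra.comul (R := K) (A := B) b) := LinearMap.congr_fun hmap _
    refine ⟨⟨Φ₀, hcounit, hcomul⟩, fun σ => ?_⟩
    refine (grade_eq_of_le gr (algGrade η Φ₀) ?_ htop ?_ σ).symm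
    · intro τ
      intro x hx
      rw [mem_algGrade_iff]
      have hh := fgr_of_mem gr hgr.1 hx
      rwa [hfg] at hh
    · exact (grading_of_bialghom η hcoact ⟨Φ₀, hcounit, hcomul⟩).1.submodule_iSupIndep
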